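/- (Lemma F.5, coarse bound on the value estimation error) On the event 𝓔₁ ∩ 𝓔₂, for all k ∈ {1,…,K}: ‖V* − v_k‖_∞ < 2H·min{1, γ^k + α^{k−1} + A_{γ,k−1}/A_∞ + 6H√(ι₁/M)} (with the convention 1/0 := ∞, so that A_{γ,k−1}/A_∞ is well-defined). -/

import Mathlib

open MeasureTheory ProbabilityTheory Finset Real

noncomputable section

/-- The transition kernel `P` applied to a state-value function:
`(Pv)(x,a) = Σ_z P(z|x,a) v(z)`. -/
def mdpP {S A : Type} [Fintype S] (P : S → A → S → ℝ) (v : S → ℝ) : S → A → ℝ :=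
  fun x a => ∑ z, P x a z * v z

/-- A policy applied to a Q-function: `(poq)(x) = Σ_a po(a|x) q(x,a)`. -/
def polAct {S A : Type} [Fintype A] (po : S → A → ℝ) (q : S → A → ℝ) : S → ℝ :=
  fun x => ∑ a, po x a * q x a

/-- `P` is a transition kernel. -/
def IsKernel {S A : Type} [Fintype S] (P : S → A → S → ℝ) : Prop :=
  (∀ x a z, 0 ≤ P x a z) ∧ ∀ x a, ∑ z, P x a z = 1

/-- `po` is a (Markov) policy. -/
def IsPolicy {S A : Type} [Fintype A] (po : S → A → ℝ) : Prop :=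
  (∀ x a, 0 ≤ po x a) ∧ ∀ x, ∑ a, po x a = 1

/-- The deterministic policy induced by `d : S → A`. -/
def detPol {S A : Type} [DecidableEq A] (d : S → A) : S → A → ℝ :=
  fun x a => if a = d x then 1 else 0

/-- The Bellman operator `T^po q = r + γ P (po q)`. -/
def bellmanOp {S A : Type} [Fintype S] [Fintype A] (P : S → A → S → ℝ) (r : S → A → ℝ)
    (γ : ℝ) (po : S → A → ℝ) (qf : S → A → ℝ) : S → A → ℝ :=
  fun x a => r x a + γ * mdpP P (polAct po qf) x a

/-- `P^po = Ppo` acting on Q-functions. -/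
def Ppi {S A : Type} [Fintype S] [Fintype A] (P : S → A → S → ℝ) (po : S → A → ℝ)
    (qf : S → A → ℝ) : S → A → ℝ :=
  mdpP P (polAct po qf)

/-- `PprodN P po j n` is `P^{po_{j+n-1}} ⋯ P^{po_j}` (`n` factors, identity for `n = 0`);
this is `P_j^i` of the paper with `n = i + 1 - j` factors. -/
def PprodN {S A : Type} [Fintype S] [Fintype A] (P : S → A → S → ℝ)
    (po : ℕ → S → A → ℝ) (j : ℕ) : ℕ → (S → A → ℝ) → S → A → ℝ
  | 0, qf => qf
  | n + 1, qf => Ppi P (po (j + n)) (PprodN P po j n qf)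

/-- The conditional standard deviation `σ(v)(x,a) = √(P(v²)(x,a) − (Pv)(x,a)²)`. -/
def sigmaP {S A : Type} [Fintype S] (P : S → A → S → ℝ) (v : S → ℝ) : S → A → ℝ :=
  fun x a => Real.sqrt (mdpP P (fun z => v z ^ 2) x a - (mdpP P v x a) ^ 2)

/-- `𝒩^po = Σ_{t=0}^∞ (γ po P)^t` acting on state-value functions. -/
def Npol {S A : Type} [Fintype S] [Fintype A] (P : S → A → S → ℝ) (γ : ℝ)
    (po : S → A → ℝ) (vf : S → ℝ) : S → ℝ :=
  fun x => ∑' t : ℕ, ((fun uf : S → ℝ => fun z => γ * polAct po (mdpP P uf) z)^[t] vf) x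

private lemma mdvi_abs_sub' (a b : ℝ) : |a - b| ≤ |a| + |b| := by
  rw [sub_eq_add_neg]
  exact (abs_add_le _ _).trans (by rw [abs_neg])

private lemma mdvi_fin_sup_attain {A : Type} [Fintype A] [Nonempty A] (f : A → ℝ) :
    (∀ a, f a ≤ ⨆ b, f b) ∧ ∃ a, (⨆ b, f b) = f a := by
  obtain ⟨a0, ha0⟩ := Finite.exists_max f
  have hb : BddAbove (Set.range f) := Set.Finite.bddAbove (Set.finite_range f)
  exact ⟨fun a => le_ciSup hb a, ⟨a0, le_antisymm (ciSup_le ha0) (le_ciSup hb a0)⟩⟩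

private lemma mdvi_pair_bound {A : Type} (F G : A → ℝ) (MF MG C : ℝ)
    (hF1 : ∀ a, F a ≤ MF) (hF2 : ∃ a, MF = F a)
    (hG1 : ∀ a, G a ≤ MG) (hG2 : ∃ a, MG = G a)
    (hC : ∀ a, |F a - G a| ≤ C) : |MF - MG| ≤ C := by
  obtain ⟨a1, ha1⟩ := hF2
  obtain ⟨a2, ha2⟩ := hG2
  rw [abs_le]
  constructor
  · rw [ha2]
    have h := (abs_le.mp (hC a2)).1
    have h2 := hF1 a2
    linarith
  · rw [ha1]
    have h := (abs_le.mp (hC a1)).2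
    have h2 := hG1 a1
    linarith

private lemma mdvi_mdpP_abs_le {S A : Type} [Fintype S] (P : S → A → S → ℝ)
    (hP : IsKernel P) (u : S → ℝ) (C : ℝ) (hu : ∀ z, |u z| ≤ C) (x : S) (a : A) :
    |mdpP P u x a| ≤ C := by
  simp only [mdpP]
  calc |∑ z, P x a z * u z| ≤ ∑ z, |P x a z * u z| := Finset.abs_sum_le_sum_abs _ _
    _ ≤ ∑ z, P x a z * C := by
        apply Finset.sum_le_sum
        intro z _
        rw [abs_mul, abs_of_nonneg (hP.1 x a z)]
        exact mul_le_mul_of_nonneg_left (hu z) (hP.1 x a z)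
    _ = C := by rw [← Finset.sum_mul, hP.2 x a, one_mul]

private lemma mdvi_mdpP_ge {S A : Type} [Fintype S] (P : S → A → S → ℝ)
    (hP : IsKernel P) (g : S → ℝ) (m : ℝ) (hg : ∀ z, m ≤ g z) (x : S) (a : A) :
    m ≤ mdpP P g x a := by
  simp only [mdpP]
  calc m = ∑ z, P x a z * m := by rw [← Finset.sum_mul, hP.2 x a, one_mul]
    _ ≤ ∑ z, P x a z * g z :=
        Finset.sum_le_sum fun z _ => mul_le_mul_of_nonneg_left (hg z) (hP.1 x a z)

private lemma mdvi_mdpP_sub {S A : Type} [Fintype S] (P : S → A → S → ℝ)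
    (u wf : S → ℝ) (x : S) (a : A) :
    mdpP P (fun z => u z - wf z) x a = mdpP P u x a - mdpP P wf x a := by
  simp only [mdpP, ← Finset.sum_sub_distrib]
  exact Finset.sum_congr rfl fun z _ => by ring

private lemma mdvi_mdpP_sub_smul {S A : Type} [Fintype S] (P : S → A → S → ℝ)
    (u wf : S → ℝ) (c : ℝ) (uv : S → ℝ) (h : ∀ z, uv z = u z - c * wf z) (x : S) (a : A) :
    mdpP P uv x a = mdpP P u x a - c * mdpP P wf x a := by
  simp only [mdpP, Finset.mul_sum, ← Finset.sum_sub_distrib]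
  exact Finset.sum_congr rfl fun z _ => by rw [h z]; ring

private lemma mdvi_mdpP_smul_sub {S A : Type} [Fintype S] (P : S → A → S → ℝ)
    (u wf : S → ℝ) (c : ℝ) (x : S) (a : A) :
    mdpP P (fun z => c * u z - wf z) x a = c * mdpP P u x a - mdpP P wf x a := by
  simp only [mdpP, Finset.mul_sum, ← Finset.sum_sub_distrib]
  exact Finset.sum_congr rfl fun z _ => by ring

private lemma mdvi_geom_succ (γ : ℝ) (n : ℕ) :
    ∑ j ∈ Finset.range (n+1), γ^j = 1 + γ * ∑ j ∈ Finset.range n, γ^j := by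
  rw [Finset.sum_range_succ', pow_zero, Finset.mul_sum, add_comm]
  congr 1
  exact Finset.sum_congr rfl fun i _ => by rw [pow_succ]; ring

private lemma mdvi_geom_le (γ : ℝ) (h0 : 0 ≤ γ) (h1 : γ < 1) (n : ℕ) :
    ∑ j ∈ Finset.range n, γ^j ≤ 1 / (1-γ) := by
  have h2 : (1-γ) * ∑ j ∈ Finset.range n, γ^j = 1 - γ^n := by
    linear_combination (-1 : ℝ) * geom_sum_mul γ n
  have h3 : 0 ≤ γ^n := pow_nonneg h0 n
  rw [le_div_iff₀ (by linarith)]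
  nlinarith

private lemma mdvi_agk_succ (γ α : ℝ) (k : ℕ) :
    ∑ i ∈ Finset.range (k+1), γ^(k+1-i) * α^i
      = γ * (∑ i ∈ Finset.range k, γ^(k-i) * α^i) + γ * α^k := by
  rw [Finset.sum_range_succ, Finset.mul_sum]
  congr 1
  · exact Finset.sum_congr rfl fun i hi => by
      have h : k + 1 - i = (k - i) + 1 := by
        have := Finset.mem_range.mp hi; omega
      rw [h, pow_succ]; ring
  · have h : k + 1 - k = 1 := by omega
    rw [h, pow_one]

private lemma mdvi_atil_succ (γ α : ℝ) (n : ℕ) :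
    ∑ i ∈ Finset.range (n+2), γ^(n+1-i) * α^i
      = γ * (∑ i ∈ Finset.range (n+1), γ^(n-i) * α^i) + α^(n+1) := by
  rw [Finset.sum_range_succ, Nat.sub_self, pow_zero, one_mul, Finset.mul_sum]
  congr 1
  exact Finset.sum_congr rfl fun i hi => by
    have h : n + 1 - i = (n - i) + 1 := by
      have := Finset.mem_range.mp hi; omega
    rw [h, pow_succ]; ring

private lemma mdvi_key_id (γ α : ℝ) (n : ℕ) :
    (1-γ) * (∑ i ∈ Finset.range (n+1), γ^(n-i) * α^i)
      = (1-α) * (∑ j ∈ Finset.range n, γ^(n-j) * α^j) + α^n - γ^(n+1) := by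
  induction n with
  | zero => simp
  | succ n ih =>
    have h1 : ∑ i ∈ Finset.range (n+1+1), γ^(n+1-i) * α^i
        = γ * (∑ i ∈ Finset.range (n+1), γ^(n-i) * α^i) + α^(n+1) :=
      mdvi_atil_succ γ α n
    have h2 : ∑ j ∈ Finset.range (n+1), γ^(n+1-j) * α^j
        = γ * (∑ j ∈ Finset.range n, γ^(n-j) * α^j) + γ * α^n := by
      rw [Finset.sum_range_succ, Finset.mul_sum]
      congr 1
      · exact Finset.sum_congr rfl fun j hj => by
          have h : n + 1 - j = (n - j) + 1 := by
            have := Finset.mem_range.mp hj; omega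
          rw [h, pow_succ]; ring
      · have h : n + 1 - n = 1 := by omega
        rw [h, pow_one]
    rw [h1, h2]
    linear_combination γ * ih

set_option maxHeartbeats 4000000

/-- Lemma F.5: coarse bound on the value estimation error. -/
theorem mdvi_coarse_value_estimation_bound
    (α : ℝ) (hα0 : 0 ≤ α) (hα1 : α < 1)
    (S A : Type) [Fintype S] [Fintype A] [Nonempty S] [Nonempty A] [DecidableEq A]
    (P : S → A → S → ℝ) (hP : IsKernel P)
    (r : S → A → ℝ) (hr : ∀ x a, |r x a| ≤ 1)
    (γ H : ℝ) (hγ0 : 0 ≤ γ) (hγ1 : γ < 1) (hH : H = 1 / (1 - γ))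
    (Qpol : (S → A → ℝ) → S → A → ℝ)
    (hQ : ∀ po, IsPolicy po → bellmanOp P r γ po (Qpol po) = Qpol po)
    (pstar : S → A → ℝ) (hpstar : IsPolicy pstar)
    (hopt : ∀ po, IsPolicy po → ∀ x, polAct po (Qpol po) x ≤ polAct pstar (Qpol pstar) x)
    (K M : ℕ) (hM : 1 ≤ M)
    (y : ℕ → ℕ → S → A → S)
    (w v : ℕ → S → ℝ) (sq qv : ℕ → S → A → ℝ)
    (hs0 : ∀ x a, sq 0 x a = 0) (hw0 : ∀ x, w 0 x = 0)
    (hv : ∀ k x, v k x = w k x - α * w (k - 1) x)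
    (hqv : ∀ k x a, qv (k + 1) x a
      = r x a + (γ / (M : ℝ)) * ∑ m ∈ Finset.range M, v k (y k m x a))
    (hsq : ∀ k x a, sq (k + 1) x a = qv (k + 1) x a + α * sq k x a)
    (hwk : ∀ k x, w (k + 1) x = ⨆ a, sq (k + 1) x a)
    (pol : ℕ → S → A)
    (hgreedy : ∀ k x a, sq k x a ≤ sq k x (pol k x))
    (εf Ef : ℕ → S → A → ℝ)
    (hεf : ∀ k x a, εf (k + 1) x a
      = (γ / (M : ℝ)) * ∑ m ∈ Finset.range M, v k (y k m x a) - γ * mdpP P (v k) x a)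
    (hEf : ∀ k x a, Ef k x a = ∑ j ∈ Finset.range k, α ^ (k - 1 - j) * εf (j + 1) x a)
    (δ : ℝ) (hδ0 : 0 < δ) (hδ1 : δ < 1)
    (hE1 : ∀ k ∈ Finset.Icc 1 K, ∀ x a, |Ef k x a|
      < 3 * H * Real.sqrt (((1 : ℝ) / (1 - α)) *
          Real.log ((8 * K * Fintype.card S * Fintype.card A : ℝ) / δ) / (M : ℝ)))
    (hE2 : ∀ k ∈ Finset.Icc 1 K, ∀ x a, |εf k x a|
      < 3 * H * Real.sqrt (
          Real.log ((8 * K * Fintype.card S * Fintype.card A : ℝ) / δ) / (M : ℝ)))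
    :
    ∀ k ∈ Finset.Icc 1 K, ∀ x,
      |polAct pstar (Qpol pstar) x - v k x| <
        2 * H * min 1
          (γ ^ k + α ^ (k - 1)
            + (∑ j ∈ Finset.range (k - 1), γ ^ (k - 1 - j) * α ^ j) / ((1 : ℝ) / (1 - α))
            + 6 * H * Real.sqrt (
                Real.log ((8 * K * Fintype.card S * Fintype.card A : ℝ) / δ) / (M : ℝ))) := by
  intro k hk x
  obtain ⟨hk1, hkK⟩ := Finset.mem_Icc.mp hk
  -- basic numeric facts
  have hMR : (1:ℝ) ≤ (M:ℝ) := by exact_mod_cast hM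
  have hMpos : (0:ℝ) < (M:ℝ) := by linarith
  have hMne : (M:ℝ) ≠ 0 := ne_of_gt hMpos
  have h1γ : (0:ℝ) < 1 - γ := by linarith
  have h1α : (0:ℝ) < 1 - α := by linarith
  have hH0 : 0 < H := by rw [hH]; positivity
  have hHγ : H * (1 - γ) = 1 := by rw [hH]; field_simp
  have hH1 : 1 ≤ H := by nlinarith
  -- abbreviations
  set Qs := Qpol pstar with hQsdef
  set Vs := polAct pstar Qs with hVsdef
  set ι := Real.log ((8 * K * Fintype.card S * Fintype.card A : ℝ) / δ) with hιdef
  set εb := 3 * H * Real.sqrt (ι / (M:ℝ)) with hεbdef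
  set EB := 3 * H * Real.sqrt (((1 : ℝ) / (1 - α)) * ι / (M:ℝ)) with hEBdef
  have hsqrt0 : 0 ≤ Real.sqrt (ι / (M:ℝ)) := Real.sqrt_nonneg _
  have hεb0 : 0 ≤ εb := by
    rw [hεbdef]; exact mul_nonneg (by linarith) hsqrt0
  have hEB0 : 0 ≤ EB := by
    rw [hEBdef]; exact mul_nonneg (by linarith) (Real.sqrt_nonneg _)
  have hEBrel : (1 - α) * EB ≤ εb := by
    have hsm : Real.sqrt (((1 : ℝ) / (1 - α)) * ι / (M:ℝ))
        = Real.sqrt ((1 : ℝ) / (1 - α)) * Real.sqrt (ι / (M:ℝ)) := by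
      rw [mul_div_assoc, Real.sqrt_mul (by positivity)]
    have hs2 : (1 - α) * Real.sqrt ((1 : ℝ) / (1 - α)) = Real.sqrt (1 - α) := by
      rw [one_div, Real.sqrt_inv]
      have hs0 : 0 < Real.sqrt (1 - α) := Real.sqrt_pos.mpr h1α
      field_simp
      rw [Real.sq_sqrt h1α.le]
    have hs3 : Real.sqrt (1 - α) ≤ 1 := Real.sqrt_le_one.mpr (by linarith)
    have : (1 - α) * EB = 3 * H * (Real.sqrt (1 - α) * Real.sqrt (ι / (M:ℝ))) := by
      rw [hEBdef, hsm, ← hs2]; ring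
    rw [this, hεbdef]
    nlinarith [hs3, hsqrt0, hH0]
  -- positivity of the noise level
  have hιpos : 0 < ι := by
    rw [hιdef]
    apply Real.log_pos
    have hc1 : (1:ℝ) ≤ (K:ℝ) := by exact_mod_cast le_trans hk1 hkK
    have hc2 : (1:ℝ) ≤ (Fintype.card S : ℝ) := by exact_mod_cast Fintype.card_pos
    have hc3 : (1:ℝ) ≤ (Fintype.card A : ℝ) := by exact_mod_cast Fintype.card_pos
    rw [lt_div_iff₀ hδ0]
    have h8a : (8:ℝ) ≤ 8 * (K:ℝ) := by linarith
    have h8b : 8 * (K:ℝ) ≤ 8 * (K:ℝ) * (Fintype.card S : ℝ) := by nlinarith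
    have h8c : 8 * (K:ℝ) * (Fintype.card S : ℝ)
        ≤ 8 * (K:ℝ) * (Fintype.card S : ℝ) * (Fintype.card A : ℝ) := by nlinarith
    linarith
  have hεbpos : 0 < εb := by
    rw [hεbdef]
    have : 0 < Real.sqrt (ι / (M:ℝ)) := Real.sqrt_pos.mpr (by positivity)
    nlinarith
  -- Bellman fixed point for the optimal policy
  have hQfix : ∀ xx aa, Qs xx aa = r xx aa + γ * mdpP P Vs xx aa := by
    intro xx aa
    have h := congrFun (congrFun (hQ pstar hpstar) xx) aa
    simp only [bellmanOp] at h
    rw [← hQsdef] at h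
    rw [← h, hVsdef]
  -- |Vs| ≤ H
  have hVH : ∀ xx, |Vs xx| ≤ H := by
    obtain ⟨x0, hx0⟩ := Finite.exists_max (fun xx => |Vs xx|)
    have hQb : ∀ aa, |Qs x0 aa| ≤ 1 + γ * |Vs x0| := by
      intro aa
      rw [hQfix x0 aa]
      have h1 := mdvi_mdpP_abs_le P hP Vs (|Vs x0|) (fun z => hx0 z) x0 aa
      calc |r x0 aa + γ * mdpP P Vs x0 aa| ≤ |r x0 aa| + |γ * mdpP P Vs x0 aa| :=
            abs_add_le _ _
        _ ≤ 1 + γ * |Vs x0| := by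
            rw [abs_mul, abs_of_nonneg hγ0]
            exact add_le_add (hr x0 aa) (mul_le_mul_of_nonneg_left h1 hγ0)
    have hVx0 : |Vs x0| ≤ 1 + γ * |Vs x0| := by
      have h2 : |Vs x0| ≤ ∑ aa, pstar x0 aa * (1 + γ * |Vs x0|) := by
        calc |Vs x0| = |∑ aa, pstar x0 aa * Qs x0 aa| := by rw [hVsdef]; rfl
          _ ≤ ∑ aa, |pstar x0 aa * Qs x0 aa| := Finset.abs_sum_le_sum_abs _ _
          _ ≤ ∑ aa, pstar x0 aa * (1 + γ * |Vs x0|) := by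
              apply Finset.sum_le_sum
              intro aa _
              rw [abs_mul, abs_of_nonneg (hpstar.1 x0 aa)]
              exact mul_le_mul_of_nonneg_left (hQb aa) (hpstar.1 x0 aa)
      rw [← Finset.sum_mul, hpstar.2 x0, one_mul] at h2
      exact h2
    have hfin : |Vs x0| ≤ H := by
      rw [hH, le_div_iff₀ h1γ]
      nlinarith
    exact fun xx => (hx0 xx).trans hfin
  -- greedy action and optimality of Vs
  have hgr : ∀ xx : S, ∃ aa : A, ∀ bb : A, Qs xx bb ≤ Qs xx aa :=
    fun xx => Finite.exists_max (fun aa => Qs xx aa)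
  choose d hd using hgr
  have hpoP : IsPolicy (detPol d) := by
    constructor
    · intro xx aa
      unfold detPol
      split <;> norm_num
    · intro xx
      simp [detPol, Finset.sum_ite_eq']
  have hdet : ∀ (f : S → A → ℝ) (xx : S), polAct (detPol d) f xx = f xx (d xx) := by
    intro f xx
    simp [polAct, detPol, ite_mul, Finset.sum_ite_eq']
  have hVle : ∀ xx, Vs xx ≤ Qs xx (d xx) := by
    intro xx
    have h1 : Vs xx = ∑ aa, pstar xx aa * Qs xx aa := by rw [hVsdef]; rfl
    rw [h1]
    calc ∑ aa, pstar xx aa * Qs xx aa ≤ ∑ aa, pstar xx aa * Qs xx (d xx) :=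
          Finset.sum_le_sum fun aa _ =>
            mul_le_mul_of_nonneg_left (hd xx aa) (hpstar.1 xx aa)
      _ = Qs xx (d xx) := by rw [← Finset.sum_mul, hpstar.2 xx, one_mul]
  have hQdfix : ∀ xx aa, Qpol (detPol d) xx aa
      = r xx aa + γ * mdpP P (fun z => Qpol (detPol d) z (d z)) xx aa := by
    intro xx aa
    have h := congrFun (congrFun (hQ (detPol d) hpoP) xx) aa
    simp only [bellmanOp] at h
    rw [← h]
    congr 1
    congr 1
    simp only [mdpP]
    exact Finset.sum_congr rfl fun z _ => by rw [hdet (Qpol (detPol d)) z]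
  have hQsQd : ∀ xx aa, Qs xx aa ≤ Qpol (detPol d) xx aa := by
    obtain ⟨⟨x1, a1⟩, hp0⟩ := Finite.exists_min
      (fun p : S × A => Qpol (detPol d) p.1 p.2 - Qs p.1 p.2)
    have hp0' : ∀ xx aa, Qpol (detPol d) x1 a1 - Qs x1 a1
        ≤ Qpol (detPol d) xx aa - Qs xx aa := fun xx aa => hp0 (xx, aa)
    have hmz : 0 ≤ Qpol (detPol d) x1 a1 - Qs x1 a1 := by
      have h1 : Qpol (detPol d) x1 a1 - Qs x1 a1
          = γ * mdpP P (fun z => Qpol (detPol d) z (d z) - Vs z) x1 a1 := by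
        rw [hQdfix x1 a1, hQfix x1 a1,
          mdvi_mdpP_sub P (fun z => Qpol (detPol d) z (d z)) Vs x1 a1]
        ring
      have h2 : Qpol (detPol d) x1 a1 - Qs x1 a1
          ≤ mdpP P (fun z => Qpol (detPol d) z (d z) - Vs z) x1 a1 := by
        apply mdvi_mdpP_ge P hP _ _ _ x1 a1
        intro z
        have ha := hp0' z (d z)
        have hb := hVle z
        linarith
      nlinarith [mul_nonneg hγ0 (sub_nonneg.mpr h2), h1, h1γ]
    intro xx aa
    linarith [hp0' xx aa, hmz]
  have hVeq : ∀ xx, Vs xx = Qs xx (d xx) := by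
    intro xx
    have h2 : Qs xx (d xx) ≤ Vs xx := by
      calc Qs xx (d xx) ≤ Qpol (detPol d) xx (d xx) := hQsQd xx (d xx)
        _ = polAct (detPol d) (Qpol (detPol d)) xx := (hdet (Qpol (detPol d)) xx).symm
        _ ≤ Vs xx := by rw [hVsdef, hQsdef]; exact hopt (detPol d) hpoP xx
    linarith [hVle xx]
  have hVub : ∀ xx aa, Qs xx aa ≤ Vs xx := fun xx aa => by
    rw [hVeq xx]; exact hd xx aa
  -- basic recursions
  have hv0 : ∀ z, v 0 z = 0 := by
    intro z
    rw [hv 0 z]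
    simp [hw0]
  have hE_rec : ∀ kk xx aa, Ef (kk+1) xx aa = εf (kk+1) xx aa + α * Ef kk xx aa := by
    intro kk xx aa
    rw [hEf (kk+1), hEf kk, Finset.sum_range_succ]
    have h1 : kk + 1 - 1 - kk = 0 := by omega
    have h2 : ∀ j ∈ Finset.range kk,
        α^(kk+1-1-j) * εf (j+1) xx aa = α * (α^(kk-1-j) * εf (j+1) xx aa) := by
      intro j hj
      have hj' := Finset.mem_range.mp hj
      have h3 : kk + 1 - 1 - j = (kk - 1 - j) + 1 := by omega
      rw [h3, pow_succ]; ring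
    rw [Finset.sum_congr rfl h2, ← Finset.mul_sum, h1, pow_zero, one_mul]
    ring
  have hEf0 : ∀ xx aa, Ef 0 xx aa = 0 := by
    intro xx aa; rw [hEf]; simp
  have hε1z : ∀ xx aa, εf 1 xx aa = 0 := by
    intro xx aa
    rw [hεf 0 xx aa]
    have hz1 : ∑ i ∈ Finset.range M, v 0 (y 0 i xx aa) = 0 :=
      Finset.sum_eq_zero fun i _ => hv0 _
    have hz2 : mdpP P (v 0) xx aa = 0 := by
      simp only [mdpP]
      exact Finset.sum_eq_zero fun z _ => by rw [hv0 z, mul_zero]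
    rw [hz1, hz2]
    ring
  have hEf1z : ∀ xx aa, Ef 1 xx aa = 0 := by
    intro xx aa
    rw [hE_rec 0 xx aa, hε1z, hEf0]
    ring
  -- the key identity for s_k
  have hskey : ∀ kk xx aa, sq (kk+1) xx aa =
      (∑ j ∈ Finset.range (kk+1), α^j) * r xx aa + γ * mdpP P (w kk) xx aa
        + Ef (kk+1) xx aa := by
    intro kk
    induction kk with
    | zero =>
      intro xx aa
      rw [hsq 0 xx aa, hqv 0 xx aa, hs0 xx aa]
      have hz1 : ∑ i ∈ Finset.range M, v 0 (y 0 i xx aa) = 0 :=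
        Finset.sum_eq_zero fun i _ => hv0 _
      have hz2 : mdpP P (w 0) xx aa = 0 := by
        simp only [mdpP]
        exact Finset.sum_eq_zero fun z _ => by rw [hw0 z, mul_zero]
      rw [hz1, hz2, hEf1z xx aa]
      simp
    | succ kk ih =>
      intro xx aa
      rw [hsq (kk+1) xx aa, hqv (kk+1) xx aa, ih xx aa]
      have hde : (γ / (M:ℝ)) * ∑ i ∈ Finset.range M, v (kk+1) (y (kk+1) i xx aa)
          = εf (kk+2) xx aa + γ * mdpP P (v (kk+1)) xx aa := by
        have h := hεf (kk+1) xx aa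
        linarith
      have hvm : mdpP P (v (kk+1)) xx aa
          = mdpP P (w (kk+1)) xx aa - α * mdpP P (w kk) xx aa := by
        apply mdvi_mdpP_sub_smul P (w (kk+1)) (w kk) α (v (kk+1)) _ xx aa
        intro z
        rw [hv (kk+1) z]
        simp
      have hEr := hE_rec (kk+1) xx aa
      have hgs : (∑ j ∈ Finset.range (kk+2), α^j)
          = 1 + α * ∑ j ∈ Finset.range (kk+1), α^j := mdvi_geom_succ α (kk+1)
      rw [hde, hvm, hgs]
      linear_combination (-1 : ℝ) * hEr
  -- sup attainment facts
  have hwsup : ∀ kk xx, (∀ aa, sq (kk+1) xx aa ≤ w (kk+1) xx)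
      ∧ ∃ aa, w (kk+1) xx = sq (kk+1) xx aa := by
    intro kk xx
    rw [hwk kk xx]
    exact mdvi_fin_sup_attain _
  have hsqlew : ∀ kk xx aa, sq kk xx aa ≤ w kk xx := by
    intro kk
    match kk with
    | 0 => intro xx aa; rw [hs0, hw0]
    | kk+1 => exact fun xx aa => (hwsup kk xx).1 aa
  have hwatt : ∀ kk xx, ∃ aa, w kk xx = sq kk xx aa := by
    intro kk
    match kk with
    | 0 => exact fun xx => ⟨Classical.arbitrary A, by rw [hs0, hw0]⟩
    | kk+1 => exact fun xx => (hwsup kk xx).2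
  -- crude bound on v
  have hvb : ∀ kk xx, |v kk xx| ≤ (1 - γ^kk) * H := by
    intro kk
    induction kk with
    | zero => intro xx; simp [hv0]
    | succ m ih =>
      intro xx
      have hq : ∀ aa, |qv (m+1) xx aa| ≤ 1 + γ * ((1 - γ^m) * H) := by
        intro aa
        rw [hqv m xx aa]
        have hs : |∑ i ∈ Finset.range M, v m (y m i xx aa)| ≤ (M:ℝ) * ((1 - γ^m) * H) := by
          calc |∑ i ∈ Finset.range M, v m (y m i xx aa)|
              ≤ ∑ i ∈ Finset.range M, |v m (y m i xx aa)| := Finset.abs_sum_le_sum_abs _ _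
            _ ≤ ∑ _i ∈ Finset.range M, (1 - γ^m) * H := Finset.sum_le_sum fun i _ => ih _
            _ = (M:ℝ) * ((1 - γ^m) * H) := by
                rw [Finset.sum_const, Finset.card_range, nsmul_eq_mul]
        have hd0 : (0:ℝ) ≤ γ / (M:ℝ) := div_nonneg hγ0 hMpos.le
        calc |r xx aa + (γ / (M:ℝ)) * ∑ i ∈ Finset.range M, v m (y m i xx aa)|
            ≤ |r xx aa| + |(γ / (M:ℝ)) * ∑ i ∈ Finset.range M, v m (y m i xx aa)| :=
              abs_add_le _ _
          _ ≤ 1 + (γ / (M:ℝ)) * ((M:ℝ) * ((1 - γ^m) * H)) := by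
              rw [abs_mul, abs_of_nonneg hd0]
              exact add_le_add (hr xx aa) (mul_le_mul_of_nonneg_left hs hd0)
          _ = 1 + γ * ((1 - γ^m) * H) := by
              field_simp
      have hvm1 : v (m+1) xx = w (m+1) xx - α * w m xx := by
        rw [hv (m+1) xx]; simp
      obtain ⟨a1, ha1⟩ := hwatt (m+1) xx
      obtain ⟨a0, ha0⟩ := hwatt m xx
      have hup : v (m+1) xx ≤ 1 + γ * ((1 - γ^m) * H) := by
        have h2 : w (m+1) xx = qv (m+1) xx a1 + α * sq m xx a1 := by
          rw [ha1, hsq m xx a1]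
        have h3 : α * sq m xx a1 ≤ α * w m xx :=
          mul_le_mul_of_nonneg_left (hsqlew m xx a1) hα0
        have h4 := (abs_le.mp (hq a1)).2
        rw [hvm1, h2]
        linarith
      have hlo : -(1 + γ * ((1 - γ^m) * H)) ≤ v (m+1) xx := by
        have h2 : sq (m+1) xx a0 = qv (m+1) xx a0 + α * sq m xx a0 := hsq m xx a0
        have h3 : sq (m+1) xx a0 ≤ w (m+1) xx := hsqlew (m+1) xx a0
        have h4 := (abs_le.mp (hq a0)).1
        rw [hvm1, ha0]
        linarith
      have hcalc : 1 + γ * ((1 - γ^m) * H) = (1 - γ^(m+1)) * H := by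
        linear_combination (-1 : ℝ) * hHγ
      rw [← hcalc]
      exact abs_le.mpr ⟨hlo, hup⟩
  have hvbH : ∀ kk xx, |v kk xx| ≤ H := by
    intro kk xx
    have := hvb kk xx
    nlinarith [pow_nonneg hγ0 kk]
  -- bound on d_k = Λ_k V* - w_k
  have hdB : ∀ (cE : ℝ), 0 ≤ cE →
      (∀ j, 1 ≤ j → j ≤ K → ∀ xx aa, |Ef j xx aa| ≤ cE) →
      ∀ kk, kk ≤ K → ∀ xx,
        |(∑ j ∈ Finset.range kk, α^j) * Vs xx - w kk xx| ≤
          H * (∑ i ∈ Finset.range kk, γ^(kk-i) * α^i)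
            + cE * (∑ j ∈ Finset.range kk, γ^j) := by
    intro cE hcE0 hcE kk
    induction kk with
    | zero => intro _ xx; simp [hw0]
    | succ m ih =>
      intro hmK
      have ihm := ih (by omega)
      intro xx
      have hΛpos : (0:ℝ) ≤ ∑ j ∈ Finset.range (m+1), α^j :=
        Finset.sum_nonneg fun j _ => pow_nonneg hα0 j
      have hF1 : ∀ aa, (∑ j ∈ Finset.range (m+1), α^j) * Qs xx aa
          ≤ (∑ j ∈ Finset.range (m+1), α^j) * Vs xx :=
        fun aa => mul_le_mul_of_nonneg_left (hVub xx aa) hΛpos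
      have hF2 : ∃ aa, (∑ j ∈ Finset.range (m+1), α^j) * Vs xx
          = (∑ j ∈ Finset.range (m+1), α^j) * Qs xx aa :=
        ⟨d xx, by rw [hVeq xx]⟩
      obtain ⟨hG1, hG2⟩ := hwsup m xx
      have hCb : ∀ aa, |(∑ j ∈ Finset.range (m+1), α^j) * Qs xx aa - sq (m+1) xx aa|
          ≤ γ * (H * (∑ i ∈ Finset.range m, γ^(m-i) * α^i)
              + cE * (∑ j ∈ Finset.range m, γ^j)) + γ * (α^m * H) + cE := by
        intro aa
        have hgb : ∀ z, |(∑ j ∈ Finset.range (m+1), α^j) * Vs z - w m z|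
            ≤ (H * (∑ i ∈ Finset.range m, γ^(m-i) * α^i)
                + cE * (∑ j ∈ Finset.range m, γ^j)) + α^m * H := by
          intro z
          have h1 := ihm z
          have h2 : (∑ j ∈ Finset.range (m+1), α^j) * Vs z - w m z
              = ((∑ j ∈ Finset.range m, α^j) * Vs z - w m z) + α^m * Vs z := by
            rw [Finset.sum_range_succ]; ring
          rw [h2]
          have h3 : |α^m * Vs z| ≤ α^m * H := by
            rw [abs_mul, abs_of_nonneg (pow_nonneg hα0 m)]
            exact mul_le_mul_of_nonneg_left (hVH z) (pow_nonneg hα0 m)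
          calc |((∑ j ∈ Finset.range m, α^j) * Vs z - w m z) + α^m * Vs z|
              ≤ |(∑ j ∈ Finset.range m, α^j) * Vs z - w m z| + |α^m * Vs z| :=
                abs_add_le _ _
            _ ≤ _ := add_le_add h1 h3
        have hmb := mdvi_mdpP_abs_le P hP
          (fun z => (∑ j ∈ Finset.range (m+1), α^j) * Vs z - w m z) _ hgb xx aa
        have hEb := hcE (m+1) (by omega) hmK xx aa
        calc |(∑ j ∈ Finset.range (m+1), α^j) * Qs xx aa - sq (m+1) xx aa|
            = |γ * mdpP P (fun z => (∑ j ∈ Finset.range (m+1), α^j) * Vs z - w m z) xx aa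
                - Ef (m+1) xx aa| := by
              congr 1
              rw [hQfix xx aa, hskey m xx aa,
                mdvi_mdpP_smul_sub P Vs (w m) (∑ j ∈ Finset.range (m+1), α^j) xx aa]
              ring
          _ ≤ |γ * mdpP P (fun z => (∑ j ∈ Finset.range (m+1), α^j) * Vs z - w m z) xx aa|
                + |Ef (m+1) xx aa| := mdvi_abs_sub' _ _
          _ ≤ γ * (H * (∑ i ∈ Finset.range m, γ^(m-i) * α^i)
                + cE * (∑ j ∈ Finset.range m, γ^j)) + γ * (α^m * H) + cE := by
              rw [abs_mul, abs_of_nonneg hγ0]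
              have h5 := mul_le_mul_of_nonneg_left hmb hγ0
              linarith
      have hfin := mdvi_pair_bound
        (fun aa => (∑ j ∈ Finset.range (m+1), α^j) * Qs xx aa)
        (fun aa => sq (m+1) xx aa)
        ((∑ j ∈ Finset.range (m+1), α^j) * Vs xx) (w (m+1) xx) _ hF1 hF2 hG1 hG2 hCb
      refine hfin.trans (le_of_eq ?_)
      rw [mdvi_agk_succ γ α m, mdvi_geom_succ γ m]
      ring
  -- bound on Δ_k = w_k - w_{k-1}
  have hΔB : ∀ (cD : ℝ), 0 ≤ cD →
      (∀ j, 1 ≤ j → j ≤ K → ∀ xx aa, |Ef j xx aa - Ef (j-1) xx aa| ≤ cD) →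
      ∀ kk, 1 ≤ kk → kk ≤ K → ∀ xx,
        |w kk xx - w (kk-1) xx| ≤ (∑ i ∈ Finset.range kk, γ^(kk-1-i) * α^i)
          + cD * (∑ j ∈ Finset.range kk, γ^j) := by
    intro cD hcD0 hcD kk
    induction kk with
    | zero => intro h; exact absurd h (by omega)
    | succ m ih =>
      intro _ hmK
      rcases Nat.eq_zero_or_pos m with rfl | hm1
      · intro xx
        simp only [Nat.add_sub_cancel]
        rw [hw0 xx, sub_zero]
        obtain ⟨_, ⟨a1, ha1⟩⟩ := hwsup 0 xx
        have hb : ∀ aa, |sq (0+1) xx aa| ≤ 1 + cD := by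
          intro aa
          rw [hskey 0 xx aa]
          have hz2 : mdpP P (w 0) xx aa = 0 := by
            simp only [mdpP]
            exact Finset.sum_eq_zero fun z _ => by rw [hw0 z, mul_zero]
          have hz3 : |Ef 1 xx aa| ≤ cD := by
            have h := hcD 1 le_rfl (by omega) xx aa
            simpa [hEf0] using h
          have hone : (∑ j ∈ Finset.range (0+1), α^j) = 1 := by simp
          rw [hz2, hone]
          calc |1 * r xx aa + γ * 0 + Ef 1 xx aa| = |r xx aa + Ef 1 xx aa| := by
                norm_num
            _ ≤ |r xx aa| + |Ef 1 xx aa| := abs_add_le _ _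
            _ ≤ 1 + cD := add_le_add (hr xx aa) hz3
        rw [ha1]
        refine (hb a1).trans ?_
        simp
      · obtain ⟨mm, rfl⟩ : ∃ mm, m = mm + 1 := ⟨m-1, by omega⟩
        have ihm := ih (by omega) (by omega)
        intro xx
        simp only [Nat.add_sub_cancel] at ihm ⊢
        obtain ⟨hF1, hF2⟩ := hwsup (mm+1) xx
        obtain ⟨hG1, hG2⟩ := hwsup mm xx
        have hCb : ∀ aa, |sq (mm+1+1) xx aa - sq (mm+1) xx aa|
            ≤ α^(mm+1) + (γ * ((∑ i ∈ Finset.range (mm+1), γ^(mm-i) * α^i)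
                + cD * (∑ j ∈ Finset.range (mm+1), γ^j))) + cD := by
          intro aa
          have h3 : |Ef (mm+1+1) xx aa - Ef (mm+1) xx aa| ≤ cD := by
            have h := hcD (mm+2) (by omega) hmK xx aa
            simpa using h
          have h2 := mdvi_mdpP_abs_le P hP (fun z => w (mm+1) z - w mm z) _
            (fun z => ihm z) xx aa
          have h1 : |α^(mm+1) * r xx aa| ≤ α^(mm+1) := by
            rw [abs_mul, abs_of_nonneg (pow_nonneg hα0 _)]
            calc α^(mm+1) * |r xx aa| ≤ α^(mm+1) * 1 :=
                  mul_le_mul_of_nonneg_left (hr xx aa) (pow_nonneg hα0 _)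
              _ = α^(mm+1) := mul_one _
          calc |sq (mm+1+1) xx aa - sq (mm+1) xx aa|
              = |α^(mm+1) * r xx aa
                  + γ * mdpP P (fun z => w (mm+1) z - w mm z) xx aa
                  + (Ef (mm+1+1) xx aa - Ef (mm+1) xx aa)| := by
                congr 1
                rw [hskey (mm+1) xx aa, hskey mm xx aa,
                  mdvi_mdpP_sub P (w (mm+1)) (w mm) xx aa,
                  Finset.sum_range_succ (fun j => α^j) (mm+1)]
                ring
            _ ≤ |α^(mm+1) * r xx aa|
                  + |γ * mdpP P (fun z => w (mm+1) z - w mm z) xx aa|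
                  + |Ef (mm+1+1) xx aa - Ef (mm+1) xx aa| := abs_add_three _ _ _
            _ ≤ α^(mm+1) + (γ * ((∑ i ∈ Finset.range (mm+1), γ^(mm-i) * α^i)
                  + cD * (∑ j ∈ Finset.range (mm+1), γ^j))) + cD := by
                rw [abs_mul γ (mdpP P (fun z => w (mm+1) z - w mm z) xx aa),
                  abs_of_nonneg hγ0]
                have h5 := mul_le_mul_of_nonneg_left h2 hγ0
                linarith
        have hfin := mdvi_pair_bound
          (fun aa => sq (mm+1+1) xx aa) (fun aa => sq (mm+1) xx aa)
          (w (mm+1+1) xx) (w (mm+1) xx) _ hF1 hF2 hG1 hG2 hCb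
        refine hfin.trans (le_of_eq ?_)
        rw [mdvi_atil_succ γ α mm, mdvi_geom_succ γ (mm+1)]
        ring
  -- decompose k = n + 1
  obtain ⟨n, rfl⟩ : ∃ n, k = n + 1 := ⟨k-1, by omega⟩
  simp only [Nat.add_sub_cancel]
  set Ap := ∑ j ∈ Finset.range n, γ ^ (n - j) * α ^ j with hApdef
  set X := γ ^ (n+1) + α ^ n + Ap / ((1 : ℝ) / (1 - α))
      + 6 * H * Real.sqrt (ι / (M:ℝ)) with hXdef
  -- the assembled bound
  have hasm : ∀ (cE cD : ℝ), 0 ≤ cE → 0 ≤ cD →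
      (∀ j, 1 ≤ j → j ≤ K → ∀ xx aa, |Ef j xx aa| ≤ cE) →
      (∀ j, 1 ≤ j → j ≤ K → ∀ xx aa, |Ef j xx aa - Ef (j-1) xx aa| ≤ cD) →
      |Vs x - v (n+1) x| ≤ 2*H*((1-α) * Ap) + 2*H*α^n - H*γ^(n+1)
        + ((1-α)*cE*H + cD*H) := by
    intro cE cD hcE0 hcD0 hcE hcD
    have p1 := hdB cE hcE0 hcE n (by omega) x
    have p2 := hΔB cD hcD0 hcD (n+1) (by omega) hkK x
    simp only [Nat.add_sub_cancel] at p2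
    have p3 := hVH x
    have honeΛ : (1-α) * (∑ j ∈ Finset.range n, α^j) + α^n = 1 := by
      linear_combination (-1 : ℝ) * geom_sum_mul α n
    have hid : Vs x - v (n+1) x
        = (1-α) * ((∑ j ∈ Finset.range n, α^j) * Vs x - w n x) + α^n * Vs x
          - (w (n+1) x - w n x) := by
      rw [hv (n+1) x]
      simp only [Nat.add_sub_cancel]
      linear_combination (-(Vs x)) * honeΛ
    have hGn : ∑ j ∈ Finset.range n, γ^j ≤ H := by
      rw [hH]; exact mdvi_geom_le γ hγ0 hγ1 n
    have hGn1 : ∑ j ∈ Finset.range (n+1), γ^j ≤ H := by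
      rw [hH]; exact mdvi_geom_le γ hγ0 hγ1 (n+1)
    have hAtil : (∑ i ∈ Finset.range (n+1), γ^(n-i) * α^i) = Ap + α^n := by
      rw [Finset.sum_range_succ, Nat.sub_self, pow_zero, one_mul, hApdef]
    have hkey : Ap + α^n = H * ((1-α)*Ap + α^n - γ^(n+1)) := by
      have h1 := mdvi_key_id γ α n
      rw [hAtil, ← hApdef] at h1
      linear_combination H * h1 - (Ap + α^n) * hHγ
    -- combine
    have t0 : |Vs x - v (n+1) x|
        ≤ (1-α) * |(∑ j ∈ Finset.range n, α^j) * Vs x - w n x| + α^n * |Vs x|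
          + |w (n+1) x - w n x| := by
      rw [hid]
      calc |(1-α) * ((∑ j ∈ Finset.range n, α^j) * Vs x - w n x) + α^n * Vs x
            - (w (n+1) x - w n x)|
          ≤ |(1-α) * ((∑ j ∈ Finset.range n, α^j) * Vs x - w n x) + α^n * Vs x|
            + |w (n+1) x - w n x| := mdvi_abs_sub' _ _
        _ ≤ |(1-α) * ((∑ j ∈ Finset.range n, α^j) * Vs x - w n x)| + |α^n * Vs x|
            + |w (n+1) x - w n x| := by
            have := abs_add_le ((1-α) * ((∑ j ∈ Finset.range n, α^j) * Vs x - w n x))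
              (α^n * Vs x)
            linarith
        _ = (1-α) * |(∑ j ∈ Finset.range n, α^j) * Vs x - w n x| + α^n * |Vs x|
            + |w (n+1) x - w n x| := by
            rw [abs_mul, abs_of_nonneg h1α.le, abs_mul,
              abs_of_nonneg (pow_nonneg hα0 n)]
    have q1 : (1-α) * |(∑ j ∈ Finset.range n, α^j) * Vs x - w n x|
        ≤ (1-α) * (H * Ap + cE * (∑ j ∈ Finset.range n, γ^j)) := by
      apply mul_le_mul_of_nonneg_left _ h1α.le
      rw [hApdef]
      exact p1
    have q2 : (1-α) * (cE * (∑ j ∈ Finset.range n, γ^j)) ≤ (1-α) * (cE * H) := by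
      apply mul_le_mul_of_nonneg_left _ h1α.le
      exact mul_le_mul_of_nonneg_left hGn hcE0
    have q3 : cD * (∑ j ∈ Finset.range (n+1), γ^j) ≤ cD * H :=
      mul_le_mul_of_nonneg_left hGn1 hcD0
    have q4 : α^n * |Vs x| ≤ α^n * H :=
      mul_le_mul_of_nonneg_left p3 (pow_nonneg hα0 n)
    have p2' : |w (n+1) x - w n x| ≤ (Ap + α^n)
        + cD * (∑ j ∈ Finset.range (n+1), γ^j) := by
      rw [← hAtil]
      exact p2
    nlinarith [t0, q1, q2, q3, q4, p2', hkey]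
  -- the two strict bounds
  have hbounds : |Vs x - v (n+1) x| < 2*H ∧ |Vs x - v (n+1) x| < 2*H*X := by
    rcases Nat.eq_zero_or_pos n with rfl | hn1
    · -- k = 1
      have hv1 : v 1 x = w 1 x := by
        rw [hv 1 x]
        simp [hw0]
      have hwb : |Vs x - v 1 x| ≤ γ * H := by
        rw [hv1]
        obtain ⟨hG1, hG2⟩ := hwsup 0 x
        apply mdvi_pair_bound (fun aa => Qs x aa) (fun aa => sq (0+1) x aa)
          (Vs x) (w (0+1) x) (γ*H) (hVub x) ⟨d x, hVeq x⟩ hG1 hG2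
        intro aa
        rw [hQfix x aa, hskey 0 x aa]
        have hz2 : mdpP P (w 0) x aa = 0 := by
          simp only [mdpP]
          exact Finset.sum_eq_zero fun z _ => by rw [hw0 z, mul_zero]
        have hone : (∑ j ∈ Finset.range (0+1), α^j) = 1 := by simp
        rw [hz2, hone, hEf1z x aa]
        have h1 := mdvi_mdpP_abs_le P hP Vs H hVH x aa
        calc |r x aa + γ * mdpP P Vs x aa - (1 * r x aa + γ * 0 + 0)|
            = |γ * mdpP P Vs x aa| := by norm_num
          _ = γ * |mdpP P Vs x aa| := by rw [abs_mul, abs_of_nonneg hγ0]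
          _ ≤ γ * H := mul_le_mul_of_nonneg_left h1 hγ0
      have hlt2H : |Vs x - v 1 x| < 2*H := by
        have : γ * H < 2 * H := by nlinarith
        linarith [hwb]
      have hX1 : 1 ≤ X := by
        rw [hXdef]
        have h6 : 0 ≤ 6 * H * Real.sqrt (ι / (M:ℝ)) := by positivity
        have hγ1' : 0 ≤ γ^(0+1) := pow_nonneg hγ0 _
        simp only [Finset.range_zero, Finset.sum_empty, zero_div, pow_zero]
        linarith
      refine ⟨hlt2H, lt_of_lt_of_le hlt2H ?_⟩
      nlinarith [hX1, hH0]
    · -- k = n+1 ≥ 2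
      have hED : ∀ j, 1 ≤ j → j ≤ K → ∀ xx aa,
          |Ef j xx aa - Ef (j-1) xx aa| ≤ 2*εb := by
        intro j h1 h2 xx aa
        obtain ⟨i, rfl⟩ : ∃ i, j = i + 1 := ⟨j-1, by omega⟩
        simp only [Nat.add_sub_cancel]
        rw [hE_rec i xx aa]
        have h3 : |εf (i+1) xx aa| ≤ εb := (hE2 (i+1) (Finset.mem_Icc.mpr ⟨h1, h2⟩) xx aa).le
        have heq : εf (i+1) xx aa + α * Ef i xx aa - Ef i xx aa
            = εf (i+1) xx aa - (1-α) * Ef i xx aa := by ring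
        rw [heq]
        have h4 : (1-α) * |Ef i xx aa| ≤ εb := by
          rcases Nat.eq_zero_or_pos i with rfl | hip
          · rw [hEf0]; simpa using hεb0
          · have h5 : |Ef i xx aa| ≤ EB :=
              (hE1 i (Finset.mem_Icc.mpr ⟨hip, by omega⟩) xx aa).le
            calc (1-α) * |Ef i xx aa| ≤ (1-α) * EB :=
                  mul_le_mul_of_nonneg_left h5 h1α.le
              _ ≤ εb := hEBrel
        calc |εf (i+1) xx aa - (1-α) * Ef i xx aa|
            ≤ |εf (i+1) xx aa| + |(1-α) * Ef i xx aa| := mdvi_abs_sub' _ _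
          _ ≤ εb + εb := by
              rw [abs_mul, abs_of_nonneg h1α.le]
              exact add_le_add h3 h4
          _ = 2*εb := by ring
      have hE1' : ∀ j, 1 ≤ j → j ≤ K → ∀ xx aa, |Ef j xx aa| ≤ EB :=
        fun j hj1 hj2 xx aa => (hE1 j (Finset.mem_Icc.mpr ⟨hj1, hj2⟩) xx aa).le
      have hmain := hasm EB (2*εb) hEB0 (by linarith) hE1' hED
      have hnoise : (1-α)*EB*H + (2*εb)*H ≤ 3*(εb*H) := by
        have : (1-α)*EB*H ≤ εb*H := mul_le_mul_of_nonneg_right hEBrel hH0.le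
        linarith
      -- strict bound against 2HX
      have hdiv : Ap / ((1:ℝ)/(1-α)) = (1-α) * Ap := by
        rw [div_eq_mul_inv, one_div, inv_inv]
        ring
      have hXval : 2*H*X = 2*H*γ^(n+1) + 2*H*α^n + 2*H*((1-α)*Ap) + 4*(εb*H) := by
        rw [hXdef, hdiv, hεbdef]
        ring
      have hγk0 : 0 ≤ H * γ^(n+1) := mul_nonneg hH0.le (pow_nonneg hγ0 _)
      have hεH : 0 < εb * H := mul_pos hεbpos hH0
      have hltX : |Vs x - v (n+1) x| < 2*H*X := by
        rw [hXval]
        linarith [hmain, hnoise]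
      have hlt2H : |Vs x - v (n+1) x| < 2*H := by
        rcases hγ0.lt_or_eq with hγp | hγe
        · -- γ > 0 : crude bound
          have h1 := hVH x
          have h2 := hvb (n+1) x
          have h3 := mdvi_abs_sub' (Vs x) (v (n+1) x)
          nlinarith [pow_pos hγp (n+1)]
        · -- γ = 0 : noise-free bound
          have hγz : γ = 0 := hγe.symm
          have hz : ∀ j xx aa, Ef j xx aa = 0 := by
            intro j xx aa
            rw [hEf]
            apply Finset.sum_eq_zero
            intro i _
            have : εf (i+1) xx aa = 0 := by
              rw [hεf i xx aa, hγz]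
              simp
            rw [this, mul_zero]
          have hm0 := hasm 0 0 le_rfl le_rfl
            (fun j _ _ xx aa => by rw [hz]; simp)
            (fun j _ _ xx aa => by rw [hz, hz]; simp)
          have hA0 : Ap = 0 := by
            rw [hApdef]
            apply Finset.sum_eq_zero
            intro j hj
            have hj' := Finset.mem_range.mp hj
            rw [hγz, zero_pow (by omega : n - j ≠ 0), zero_mul]
          have hγk : γ^(n+1) = 0 := by
            rw [hγz]
            exact zero_pow (by omega)
          rw [hA0, hγk] at hm0
          have hαn : α^n ≤ α := by
            calc α^n ≤ α^1 := pow_le_pow_of_le_one hα0 hα1.le hn1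
              _ = α := pow_one α
          have : 2*H*α^n ≤ 2*H*α := by nlinarith
          nlinarith [hm0]
      exact ⟨hlt2H, hltX⟩
  obtain ⟨hlt2H, hltX⟩ := hbounds
  rcases le_total (1:ℝ) X with hm | hm
  · rw [min_eq_left hm, mul_one]
    exact hlt2H
  · rw [min_eq_right hm]
    exact hltX
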